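/- If F : Mod-R → Mod-S and G : Mod-S → Mod-R are mutually inverse category equivalences, then F(R) (with its induced R-S bimodule structure) is a progenerator for Mod-S, and G(S) ≅ Hom_S(F(R), S) as S-R bimodules. -/

import Mathlib

open MulOpposite CategoryTheory

/-- `P` is a generator for the category of right `S`-modules:
the functor `Hom_S(P, -)` is faithful. -/
def IsGenerator (S P : Type) [Ring S] [AddCommGroup P] [Module Sᵐᵒᵖ P] : Prop :=
  ∀ (M N : Type) [AddCommGroup M] [Module Sᵐᵒᵖ M] [AddCommGroup N] [Module Sᵐᵒᵖ N]
    (f g : M →ₗ[Sᵐᵒᵖ] N), (∀ h : P →ₗ[Sᵐᵒᵖ] M, f.comp h = g.comp h) → f = g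

/-- Left multiplication by `r` on `R`, as an endomorphism of the right regular
module `R_R`. -/
def lmul (R : Type) [Ring R] (r : R) : R →ₗ[Rᵐᵒᵖ] R where
  toFun x := r * x
  map_add' := mul_add r
  map_smul' a x := by
    simp only [MulOpposite.smul_eq_mul_unop, RingHom.id_apply, mul_assoc]

section MoritaAux

variable {R S : Type} [Ring R] [Ring S]

lemma mcapp {T : Type} [Ring T] {A B C : ModuleCat T} (f : A ⟶ B) (g : B ⟶ C) (x : A) :
    (f ≫ g) x = g (f x) := rfl

lemma mcheq {T : Type} [Ring T] {A B : ModuleCat T} {f g : A ⟶ B} (h : f = g) (x : A) :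
    f x = g x := by rw [h]

/-- `r ↦ op r • y`, as a morphism from the right regular module. -/
def phiAux (M : ModuleCat Rᵐᵒᵖ) (y : M) : ModuleCat.of Rᵐᵒᵖ R ⟶ M :=
  ModuleCat.ofHom
  { toFun := fun r => op r • y
    map_add' := fun a b => by
      show op (a + b) • y = op a • y + op b • y
      rw [MulOpposite.op_add, add_smul]
    map_smul' := fun a r => by
      show op (a • r) • y = a • (op r • y)
      rw [MulOpposite.smul_eq_mul_unop, ← mul_smul, MulOpposite.op_mul, op_unop] }

lemma phiAux_add (M : ModuleCat Rᵐᵒᵖ) (y y' : M) :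
    phiAux M (y + y') = phiAux M y + phiAux M y' := by
  apply ModuleCat.hom_ext
  apply LinearMap.ext
  intro r
  show (MulOpposite.op (α := R) r) • (y + y') = (MulOpposite.op (α := R) r) • y + (MulOpposite.op (α := R) r) • y'
  rw [smul_add]

variable (E : ModuleCat Rᵐᵒᵖ ≌ ModuleCat Sᵐᵒᵖ)

/-- the canonical element of `G(F(R))`. -/
noncomputable def wAux : E.inverse.obj (E.functor.obj (ModuleCat.of Rᵐᵒᵖ R)) :=
  E.unit.app (ModuleCat.of Rᵐᵒᵖ R) (1 : R)

lemma phiAux_one (M : ModuleCat Rᵐᵒᵖ) (y : M) : phiAux M y (1 : R) = y := by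
  show op (1 : R) • y = y
  simp

lemma phiAux_w : phiAux _ (wAux E) = E.unit.app (ModuleCat.of Rᵐᵒᵖ R) := by
  apply ModuleCat.hom_ext
  apply LinearMap.ext
  intro r
  have h1 : r = (MulOpposite.op (α := R) r) • (1 : R) := by
    rw [MulOpposite.smul_eq_mul_unop, unop_op, one_mul]
  have h3 := congrArg (E.unit.app (ModuleCat.of Rᵐᵒᵖ R)) h1
  rw [map_smul] at h3
  show (MulOpposite.op (α := R) r) • wAux E = E.unit.app (ModuleCat.of Rᵐᵒᵖ R) r
  exact h3.symm

noncomputable def toHomAux (N : ModuleCat Sᵐᵒᵖ) (y : E.inverse.obj N) :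
    E.functor.obj (ModuleCat.of Rᵐᵒᵖ R) ⟶ N :=
  E.functor.map (phiAux (E.inverse.obj N) y) ≫ E.counit.app N

noncomputable def ofHomAux (N : ModuleCat Sᵐᵒᵖ)
    (h : E.functor.obj (ModuleCat.of Rᵐᵒᵖ R) ⟶ N) : E.inverse.obj N :=
  E.inverse.map h (wAux E)

lemma ofHom_toHom (N : ModuleCat Sᵐᵒᵖ) (y : E.inverse.obj N) :
    ofHomAux E N (toHomAux E N y) = y := by
  unfold ofHomAux toHomAux
  rw [E.inverse.map_comp, mcapp]
  have h1 : E.inverse.map (E.functor.map (phiAux (E.inverse.obj N) y)) (wAux E)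
      = E.unit.app (E.inverse.obj N) y := by
    have nat := E.unit.naturality (phiAux (E.inverse.obj N) y)
    have h2 := mcheq nat (1 : R)
    rw [mcapp, mcapp] at h2
    simp only [Functor.id_map, Functor.comp_map] at h2
    have h5 := congrArg (E.unit.app (E.inverse.obj N)) (phiAux_one (E.inverse.obj N) y)
    exact (h5.symm.trans h2).symm
  rw [h1]
  have h3 := mcheq (E.unit_inverse_comp N) y
  rw [mcapp] at h3
  exact h3

lemma toHom_ofHom (N : ModuleCat Sᵐᵒᵖ) (h : E.functor.obj (ModuleCat.of Rᵐᵒᵖ R) ⟶ N) :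
    toHomAux E N (ofHomAux E N h) = h := by
  unfold ofHomAux toHomAux
  have hphi : phiAux (E.inverse.obj N) (E.inverse.map h (wAux E))
      = phiAux _ (wAux E) ≫ E.inverse.map h := by
    apply ModuleCat.hom_ext
    apply LinearMap.ext
    intro r
    show (op (r : R)) • (E.inverse.map h (wAux E)) = E.inverse.map h ((op (r : R)) • wAux E)
    rw [map_smul]
  rw [hphi, phiAux_w, E.functor.map_comp, Category.assoc]
  have nat := E.counit.naturality h
  simp only [Functor.comp_map, Functor.id_map] at nat
  rw [nat, ← Category.assoc, E.functor_unit_comp, Category.id_comp]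

lemma ofHom_comp (N N' : ModuleCat Sᵐᵒᵖ) (h : E.functor.obj (ModuleCat.of Rᵐᵒᵖ R) ⟶ N)
    (m : N ⟶ N') : ofHomAux E N' (h ≫ m) = E.inverse.map m (ofHomAux E N h) := by
  unfold ofHomAux
  rw [E.inverse.map_comp]
  rfl

lemma hom_eq_of_ofHom_eq {N : ModuleCat Sᵐᵒᵖ} {h h' : E.functor.obj (ModuleCat.of Rᵐᵒᵖ R) ⟶ N}
    (H : ofHomAux E N h = ofHomAux E N h') : h = h' := by
  rw [← toHom_ofHom E N h, H, toHom_ofHom]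

lemma toHom_comp (N N' : ModuleCat Sᵐᵒᵖ) (m : N ⟶ N') (x : E.inverse.obj N) :
    toHomAux E N' (E.inverse.map m x) = toHomAux E N x ≫ m := by
  apply (hom_eq_of_ofHom_eq E _).symm
  rw [ofHom_comp, ofHom_toHom, ofHom_toHom]

lemma toHom_smul (N : ModuleCat Sᵐᵒᵖ) (r : R) (x : E.inverse.obj N) :
    toHomAux E N ((op r : Rᵐᵒᵖ) • x)
      = E.functor.map (ModuleCat.ofHom (lmul R r)) ≫ toHomAux E N x := by
  unfold toHomAux
  have hphi : phiAux (E.inverse.obj N) ((op r : Rᵐᵒᵖ) • x)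
      = ModuleCat.ofHom (lmul R r) ≫ phiAux (E.inverse.obj N) x := by
    apply ModuleCat.hom_ext
    apply LinearMap.ext
    intro r'
    show (MulOpposite.op (α := R) r') • ((op r : Rᵐᵒᵖ) • x)
      = MulOpposite.op (α := R) (r * (show R from r')) • x
    rw [← mul_smul, ← MulOpposite.op_mul]
  rw [hphi, E.functor.map_comp, Category.assoc]

lemma toHom_add [E.functor.Additive] (N : ModuleCat Sᵐᵒᵖ) (y y' : E.inverse.obj N) :
    toHomAux E N (y + y') = toHomAux E N y + toHomAux E N y' := by
  unfold toHomAux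
  rw [phiAux_add, E.functor.map_add, Preadditive.add_comp]

lemma liftAux {N₁ N₂ : ModuleCat Sᵐᵒᵖ} (g : N₁ ⟶ N₂) (hg : Function.Surjective g)
    (f : E.functor.obj (ModuleCat.of Rᵐᵒᵖ R) ⟶ N₂) : ∃ h, h ≫ g = f := by
  haveI : Epi g := (ModuleCat.epi_iff_surjective g).mpr hg
  haveI h2 : Epi (E.inverse.map g) := inferInstance
  have hsurj : Function.Surjective (E.inverse.map g) :=
    (ModuleCat.epi_iff_surjective (E.inverse.map g)).mp h2
  obtain ⟨z, hz⟩ := hsurj (ofHomAux E N₂ f)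
  refine ⟨toHomAux E N₁ z, hom_eq_of_ofHom_eq E ?_⟩
  rw [ofHom_comp, ofHom_toHom]
  exact hz

end MoritaAux

/-- **from Morita II.** If `F : Mod-R → Mod-S` and
`G : Mod-S → Mod-R` are mutually inverse category equivalences, then `F(R)`
(with its induced `R`-`S` bimodule structure, the left `R`-action being induced
by `F` applied to left multiplications on `R`) is a progenerator for `Mod-S`,
and `G(S) ≅ Hom_S(F(R), S)` as `S`-`R` bimodules. -/
theorem morita_II (R S : Type) [Ring R] [Ring S]
    (F : ModuleCat Rᵐᵒᵖ ⥤ ModuleCat Sᵐᵒᵖ) (G : ModuleCat Sᵐᵒᵖ ⥤ ModuleCat Rᵐᵒᵖ)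
    (η : F ⋙ G ≅ 𝟭 (ModuleCat Rᵐᵒᵖ)) (ε : G ⋙ F ≅ 𝟭 (ModuleCat Sᵐᵒᵖ)) :
    Module.Finite Sᵐᵒᵖ (F.obj (ModuleCat.of Rᵐᵒᵖ R)) ∧
    Module.Projective Sᵐᵒᵖ (F.obj (ModuleCat.of Rᵐᵒᵖ R)) ∧
    IsGenerator S (F.obj (ModuleCat.of Rᵐᵒᵖ R)) ∧
    ∃ e : G.obj (ModuleCat.of Sᵐᵒᵖ S) ≃+
        ((F.obj (ModuleCat.of Rᵐᵒᵖ R)) →ₗ[Sᵐᵒᵖ] S),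
      (∀ (s : S) (x : G.obj (ModuleCat.of Sᵐᵒᵖ S)),
        e (G.map (ModuleCat.ofHom (lmul S s)) x) = (lmul S s).comp (e x)) ∧
      (∀ (r : R) (x : G.obj (ModuleCat.of Sᵐᵒᵖ S))
        (v : F.obj (ModuleCat.of Rᵐᵒᵖ R)),
        e (op r • x) v = e x (F.map (ModuleCat.ofHom (lmul R r)) v)) := by
  classical
  let E : ModuleCat Rᵐᵒᵖ ≌ ModuleCat Sᵐᵒᵖ := CategoryTheory.Equivalence.mk F G η.symm ε
  haveI hFE : F.IsEquivalence := E.isEquivalence_functor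
  haveI hGE : G.IsEquivalence := E.isEquivalence_inverse
  haveI hFadd : F.Additive := Functor.additive_of_preserves_binary_products F
  haveI hFadd' : E.functor.Additive := hFadd
  let P : ModuleCat Sᵐᵒᵖ := F.obj (ModuleCat.of Rᵐᵒᵖ R)
  let big : ModuleCat Sᵐᵒᵖ := ModuleCat.of Sᵐᵒᵖ (P →₀ Sᵐᵒᵖ)
  let π : big ⟶ P := ModuleCat.ofHom (Finsupp.linearCombination Sᵐᵒᵖ (id : P → P))
  have hπ : Function.Surjective π := fun x => ⟨Finsupp.single x (1 : Sᵐᵒᵖ), by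
    show Finsupp.linearCombination Sᵐᵒᵖ (id : P → P) (Finsupp.single x 1) = x
    rw [Finsupp.linearCombination_single, one_smul]
    rfl⟩
  obtain ⟨sec, hsec⟩ := liftAux E π hπ (𝟙 P)
  -- Projectivity
  have hproj : Module.Projective Sᵐᵒᵖ P := by
    refine Module.projective_def'.mpr ⟨sec.hom, ?_⟩
    apply LinearMap.ext
    intro x
    exact mcheq hsec x
  -- Finiteness
  let ι : ∀ _ : Finset P, ModuleCat Sᵐᵒᵖ :=
    fun t => ModuleCat.of Sᵐᵒᵖ (Finsupp.supported Sᵐᵒᵖ Sᵐᵒᵖ (↑t : Set P))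
  let inc : ∀ t : Finset P, ι t ⟶ big :=
    fun t => ModuleCat.ofHom (Finsupp.supported Sᵐᵒᵖ Sᵐᵒᵖ (↑t : Set P)).subtype
  let W : Finset P → Submodule Rᵐᵒᵖ (G.obj big) :=
    fun t => LinearMap.range ((G.map (inc t)).hom : G.obj (ι t) →ₗ[Rᵐᵒᵖ] G.obj big)
  have hmono : ∀ {t t' : Finset P}, t ⊆ t' → W t ≤ W t' := by
    intro t t' hsub y hy
    obtain ⟨z, hz⟩ := hy
    let j : ι t ⟶ ι t' :=
      ModuleCat.ofHom (Submodule.inclusion (Finsupp.supported_mono (Finset.coe_subset.mpr hsub)))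
    have hj : j ≫ inc t' = inc t := by apply ModuleCat.hom_ext; apply LinearMap.ext; intro v; rfl
    refine LinearMap.mem_range.mpr ⟨G.map j z, ?_⟩
    have e1 : G.map j ≫ G.map (inc t') = G.map (inc t) := by rw [← G.map_comp, hj]
    calc (G.map (inc t')) ((G.map j) z) = (G.map j ≫ G.map (inc t')) z := rfl
      _ = (G.map (inc t)) z := mcheq e1 z
      _ = y := hz
  have hdir : Directed (· ≤ ·) W :=
    fun t t' => ⟨t ∪ t', hmono Finset.subset_union_left, hmono Finset.subset_union_right⟩
  have hU : (⨆ t, W t) = ⊤ := by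
    set U := ⨆ t, W t with hUdef
    let q : G.obj big ⟶ ModuleCat.of Rᵐᵒᵖ (G.obj big ⧸ U) := ModuleCat.ofHom U.mkQ
    have key : ∀ t : Finset P, G.map (inc t) ≫ q = 0 := by
      intro t
      apply ModuleCat.hom_ext
      apply LinearMap.ext
      intro z
      show U.mkQ (G.map (inc t) z) = 0
      rw [Submodule.mkQ_apply, Submodule.Quotient.mk_eq_zero]
      exact le_iSup W t (LinearMap.mem_range.mpr ⟨z, rfl⟩)
    let q' : big ⟶ F.obj (ModuleCat.of Rᵐᵒᵖ (G.obj big ⧸ U)) := E.counitInv.app big ≫ F.map q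
    have hq' : ∀ x : big, q' x = 0 := by
      intro x
      have hx : x ∈ Finsupp.supported Sᵐᵒᵖ Sᵐᵒᵖ (↑x.support : Set P) :=
        (Finsupp.mem_supported _ _).mpr (by rfl)
      have hfac : (inc x.support) (⟨x, hx⟩ : Finsupp.supported Sᵐᵒᵖ Sᵐᵒᵖ (↑x.support : Set P)) = x := rfl
      have hcomp : inc x.support ≫ q' = 0 := by
        have nat := E.counitInv.naturality (inc x.support)
        simp only [Functor.id_map, Functor.comp_map] at nat
        show inc x.support ≫ E.counitInv.app big ≫ F.map q = 0
        erw [← Category.assoc, nat, Category.assoc]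
        change E.counitInv.app (ι x.support) ≫
          E.functor.map (E.inverse.map (inc x.support)) ≫ E.functor.map q = 0
        have key' : E.inverse.map (inc x.support) ≫ q = 0 := key x.support
        erw [← E.functor.map_comp, key', Functor.map_zero, Limits.comp_zero]
      calc q' x = q' ((inc x.support) ⟨x, hx⟩) := by rw [hfac]
        _ = (inc x.support ≫ q') ⟨x, hx⟩ := rfl
        _ = (0 : ι x.support ⟶ _) ⟨x, hx⟩ := mcheq hcomp _
        _ = 0 := rfl
    have hq'0 : q' = 0 := ModuleCat.hom_ext (LinearMap.ext hq')
    have hFq : F.map q = 0 := by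
      have : E.counitInv.app big ≫ F.map q = 0 := hq'0
      have h1 : E.counit.app big ≫ E.counitInv.app big ≫ F.map q = F.map q := by
        erw [← Category.assoc, Iso.hom_inv_id_app, Category.id_comp]
        rfl
      erw [← h1, this, Limits.comp_zero]
      rfl
    have hq : q = 0 := F.map_injective (by rw [hFq, Functor.map_zero])
    rw [eq_top_iff]
    intro x _
    have h0 := mcheq hq x
    have : U.mkQ x = 0 := h0
    rwa [Submodule.mkQ_apply, Submodule.Quotient.mk_eq_zero] at this
  have hy : ofHomAux E big sec ∈ ⨆ t, W t := hU ▸ Submodule.mem_top (M := G.obj big)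
  obtain ⟨t, hyt⟩ := (Submodule.mem_iSup_of_directed W hdir).mp hy
  obtain ⟨z, hz⟩ := hyt
  have h₀ : toHomAux E (ι t) z ≫ inc t = sec := by
    apply hom_eq_of_ofHom_eq E
    erw [ofHom_comp, ofHom_toHom]
    exact hz
  have hsupp : ∀ x : P, sec x ∈ Finsupp.supported Sᵐᵒᵖ Sᵐᵒᵖ (↑t : Set P) := by
    intro x
    rw [← h₀]
    exact Submodule.coe_mem _
  have hfin : Module.Finite Sᵐᵒᵖ P := by
    constructor
    rw [Submodule.fg_def]
    refine ⟨↑t, t.finite_toSet, ?_⟩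
    rw [eq_top_iff]
    rintro x -
    have hx : x = π (sec x) := (mcheq hsec x).symm
    rw [hx]
    show Finsupp.linearCombination Sᵐᵒᵖ (id : P → P) (sec x) ∈ Submodule.span Sᵐᵒᵖ (↑t : Set P)
    rw [Finsupp.linearCombination_apply, Finsupp.sum]
    refine Submodule.sum_mem _ ?_
    intro p hp
    exact Submodule.smul_mem _ _
      (Submodule.subset_span ((Finsupp.mem_supported _ _).mp (hsupp x) hp))
  -- Generator
  have hgen : IsGenerator S P := by
    intro M N _ _ _ _ f g hfg
    let f' : ModuleCat.of Sᵐᵒᵖ M ⟶ ModuleCat.of Sᵐᵒᵖ N := ModuleCat.ofHom f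
    let g' : ModuleCat.of Sᵐᵒᵖ M ⟶ ModuleCat.of Sᵐᵒᵖ N := ModuleCat.ofHom g
    have hfg' : f' = g' := by
      apply G.map_injective
      apply ModuleCat.hom_ext
      apply LinearMap.ext
      intro y
      have h2 : toHomAux E (ModuleCat.of Sᵐᵒᵖ M) y ≫ f'
          = toHomAux E (ModuleCat.of Sᵐᵒᵖ M) y ≫ g' := by
        exact ModuleCat.hom_ext (hfg (toHomAux E (ModuleCat.of Sᵐᵒᵖ M) y).hom)
      calc E.inverse.map f' y
          = E.inverse.map f' (ofHomAux E _ (toHomAux E (ModuleCat.of Sᵐᵒᵖ M) y)) := by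
            erw [ofHom_toHom]
        _ = ofHomAux E _ (toHomAux E (ModuleCat.of Sᵐᵒᵖ M) y ≫ f') := (ofHom_comp E _ _ _ f').symm
        _ = ofHomAux E _ (toHomAux E (ModuleCat.of Sᵐᵒᵖ M) y ≫ g') := by rw [h2]
        _ = E.inverse.map g' (ofHomAux E _ (toHomAux E (ModuleCat.of Sᵐᵒᵖ M) y)) := ofHom_comp E _ _ _ g'
        _ = E.inverse.map g' y := by erw [ofHom_toHom]
    exact congrArg ModuleCat.Hom.hom hfg'
  refine ⟨hfin, hproj, hgen, ?_⟩
  let sobj : ModuleCat Sᵐᵒᵖ := ModuleCat.of Sᵐᵒᵖ S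
  let e : G.obj sobj ≃+ ((P : Type) →ₗ[Sᵐᵒᵖ] S) :=
    { toFun := fun y => (toHomAux E sobj y).hom
      invFun := fun h => ofHomAux E sobj (ModuleCat.ofHom h)
      left_inv := ofHom_toHom E sobj
      right_inv := fun h => congrArg ModuleCat.Hom.hom (toHom_ofHom E sobj (ModuleCat.ofHom h))
      map_add' := fun y y' => by exact congrArg ModuleCat.Hom.hom (toHom_add E sobj y y') }
  refine ⟨e, ?_, ?_⟩
  · intro s x
    exact congrArg ModuleCat.Hom.hom (toHom_comp E sobj sobj (ModuleCat.ofHom (lmul S s)) x)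
  · intro r x v
    exact mcheq (toHom_smul E sobj r x) v
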